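/- The complex open unit disk 𝔻 = {z ∈ ℂ : |z| < 1} with Möbius addition a ⊕_M b = (a + b)/(1 + \bar{a}b) is a gyrogroup, with gyrations given by gyr[a,b](c) = ((1 + a\bar{b})/(1 + \bar{a}b))·c. -/

import Mathlib

/-- Möbius addition on the complex plane. -/
noncomputable def mAdd (a b : ℂ) : ℂ := (a + b) / (1 + (starRingEnd ℂ) a * b)

/-- The Möbius gyration `gyr[a,b]`. -/
noncomputable def mGyr (a b c : ℂ) : ℂ :=
  ((1 + a * (starRingEnd ℂ) b) / (1 + (starRingEnd ℂ) a * b)) * c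

lemma den_ne {a b : ℂ} (ha : ‖a‖ < 1) (hb : ‖b‖ < 1) :
    (1 : ℂ) + (starRingEnd ℂ) a * b ≠ 0 := by
  intro h
  have h1 : (starRingEnd ℂ) a * b = -1 := by linear_combination h
  have := congrArg norm h1
  simp [Complex.norm_conj] at this
  nlinarith [norm_nonneg a, norm_nonneg b]

lemma key_normSq (a b : ℂ) :
    Complex.normSq (1 + (starRingEnd ℂ) a * b) - Complex.normSq (a + b)
      = (1 - Complex.normSq a) * (1 - Complex.normSq b) := by
  simp [Complex.normSq_apply, Complex.mul_re, Complex.mul_im, Complex.add_re, Complex.add_im]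
  ring

lemma mAdd_lt {a b : ℂ} (ha : ‖a‖ < 1) (hb : ‖b‖ < 1) :
    ‖mAdd a b‖ < 1 := by
  have hd := den_ne ha hb
  have hna : Complex.normSq a < 1 := by rw [← Complex.sq_norm]; nlinarith [norm_nonneg a]
  have hnb : Complex.normSq b < 1 := by rw [← Complex.sq_norm]; nlinarith [norm_nonneg b]
  have hk := key_normSq a b
  have hlt : Complex.normSq (a + b) < Complex.normSq (1 + (starRingEnd ℂ) a * b) := by nlinarith
  rw [mAdd, norm_div, div_lt_one (norm_pos_iff.mpr hd)]
  have := Complex.sq_norm (a + b)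
  have := Complex.sq_norm (1 + (starRingEnd ℂ) a * b)
  nlinarith [norm_nonneg (a+b), norm_nonneg (1 + (starRingEnd ℂ) a * b)]

lemma mGyr_abs {a b : ℂ} (ha : ‖a‖ < 1) (hb : ‖b‖ < 1) (c : ℂ) :
    ‖mGyr a b c‖ = ‖c‖ := by
  have hp := den_ne ha hb
  have hq2 : (1 : ℂ) + a * (starRingEnd ℂ) b = (starRingEnd ℂ) (1 + (starRingEnd ℂ) a * b) := by
    simp [map_add, map_mul]
  rw [mGyr, norm_mul, norm_div, hq2, Complex.norm_conj, div_self (norm_pos_iff.mpr hp).ne', one_mul]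

lemma mAdd_mul (w c d : ℂ) (hw : (starRingEnd ℂ) w * w = 1) :
    mAdd (w * c) (w * d) = w * mAdd c d := by
  have h1 : w * c + w * d = w * (c + d) := by ring
  have h2 : 1 + (starRingEnd ℂ) (w * c) * (w * d) = 1 + (starRingEnd ℂ) c * d := by
    simp only [map_mul]; linear_combination ((starRingEnd ℂ) c * d) * hw
  rw [mAdd, mAdd, h1, h2, mul_div_assoc]

lemma conj_w_mul {a b : ℂ} (ha : ‖a‖ < 1) (hb : ‖b‖ < 1) :
    (starRingEnd ℂ) ((1 + a * (starRingEnd ℂ) b) / (1 + (starRingEnd ℂ) a * b)) *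
      ((1 + a * (starRingEnd ℂ) b) / (1 + (starRingEnd ℂ) a * b)) = 1 := by
  have hp := den_ne ha hb
  have hq : (1 : ℂ) + a * (starRingEnd ℂ) b ≠ 0 := by
    intro h; apply hp; have := congrArg (starRingEnd ℂ) h; simpa using this
  rw [map_div₀]
  simp only [map_add, map_one, map_mul, Complex.conj_conj]
  field_simp

/-- The open unit disk `𝔻` with Möbius addition is a gyrogroup, with gyrations
`gyr[a,b] c = ((1 + a·conj b)/(1 + conj a·b))·c`. -/
theorem mobius_gyrogroup :
    -- ⊕_M is well defined on 𝔻
    (∀ a b : ℂ, ‖a‖ < 1 → ‖b‖ < 1 → ‖(mAdd a b)‖ < 1) ∧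
    -- 0 is a (two-sided) identity
    (∀ a : ℂ, ‖a‖ < 1 → mAdd 0 a = a ∧ mAdd a 0 = a) ∧
    -- -a is a (two-sided) inverse of a
    (∀ a : ℂ, ‖a‖ < 1 → mAdd (-a) a = 0 ∧ mAdd a (-a) = 0) ∧
    -- gyr[a,b] maps 𝔻 bijectively onto 𝔻
    (∀ a b : ℂ, ‖a‖ < 1 → ‖b‖ < 1 →
      Set.BijOn (mGyr a b) {z : ℂ | ‖z‖ < 1} {z : ℂ | ‖z‖ < 1}) ∧
    -- gyr[a,b] preserves the operation
    (∀ a b c d : ℂ, ‖a‖ < 1 → ‖b‖ < 1 → ‖c‖ < 1 →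
      ‖d‖ < 1 → mGyr a b (mAdd c d) = mAdd (mGyr a b c) (mGyr a b d)) ∧
    -- left gyroassociative law
    (∀ a b c : ℂ, ‖a‖ < 1 → ‖b‖ < 1 → ‖c‖ < 1 →
      mAdd a (mAdd b c) = mAdd (mAdd a b) (mGyr a b c)) ∧
    -- left loop property
    (∀ a b c : ℂ, ‖a‖ < 1 → ‖b‖ < 1 → ‖c‖ < 1 →
      mGyr (mAdd a b) b c = mGyr a b c) := by
  refine ⟨fun a b ha hb => mAdd_lt ha hb, ?_, ?_, ?_, ?_, ?_, ?_⟩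
  · intro a _
    constructor <;> simp [mAdd]
  · intro a _
    constructor <;> simp [mAdd]
  · -- BijOn
    intro a b ha hb
    have hp := den_ne ha hb
    have hq : (1 : ℂ) + a * (starRingEnd ℂ) b ≠ 0 := by
      intro h; apply hp; have := congrArg (starRingEnd ℂ) h; simpa using this
    set w : ℂ := (1 + a * (starRingEnd ℂ) b) / (1 + (starRingEnd ℂ) a * b) with hwdef
    have hwne : w ≠ 0 := div_ne_zero hq hp
    refine ⟨fun z hz => ?_, fun z _ z' _ h => ?_, fun z hz => ?_⟩
    · simpa [Set.mem_setOf_eq, mGyr_abs ha hb z] using hz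
    · have : w * z = w * z' := h
      exact mul_left_cancel₀ hwne this
    · refine ⟨w⁻¹ * z, ?_, ?_⟩
      · have habsw : ‖w‖ = 1 := by
          have := mGyr_abs ha hb 1
          simpa [mGyr, ← hwdef] using this
        simp only [Set.mem_setOf_eq, norm_mul, norm_inv, habsw, inv_one, one_mul]
        exact hz
      · show w * (w⁻¹ * z) = z
        field_simp
  · -- gyr preserves ⊕
    intro a b c d ha hb _ _
    have hw := conj_w_mul ha hb
    simp only [mGyr]
    exact (mAdd_mul _ c d hw).symm
  · -- left gyroassociativity
    intro a b c ha hb hc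
    have hp := den_ne ha hb
    have hq : (1 : ℂ) + a * (starRingEnd ℂ) b ≠ 0 := by
      intro h; apply hp; have := congrArg (starRingEnd ℂ) h; simpa using this
    have hbc := den_ne hb hc
    have h1 : (1 : ℂ) + (starRingEnd ℂ) a * mAdd b c ≠ 0 := den_ne ha (mAdd_lt hb hc)
    have hgyr : ‖mGyr a b c‖ = ‖c‖ := mGyr_abs ha hb c
    have h2 : (1 : ℂ) + (starRingEnd ℂ) (mAdd a b) * mGyr a b c ≠ 0 :=
      den_ne (mAdd_lt ha hb) (hgyr ▸ hc)
    set N : ℂ := a + b + c + a * (starRingEnd ℂ) b * c with hN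
    set D : ℂ := 1 + (starRingEnd ℂ) a * b + (starRingEnd ℂ) a * c + (starRingEnd ℂ) b * c
      with hD
    have hDne : D ≠ 0 := by
      have : D = (1 + (starRingEnd ℂ) b * c) * (1 + (starRingEnd ℂ) a * mAdd b c) := by
        rw [mAdd]; field_simp; ring
      rw [this]; exact mul_ne_zero hbc h1
    have hL : mAdd a (mAdd b c) = N / D := by
      simp only [mAdd] at h1 ⊢
      rw [div_eq_div_iff h1 hDne]
      have hbc' : (1 : ℂ) + c * (starRingEnd ℂ) b ≠ 0 := by rwa [mul_comm]
      field_simp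
      ring
    have hR : mAdd (mAdd a b) (mGyr a b c) = N / D := by
      simp only [mAdd, mGyr] at h2 ⊢
      rw [div_eq_div_iff h2 hDne]
      simp only [map_div₀, map_add, map_mul, map_one, Complex.conj_conj] at *
      have hp' : (1 : ℂ) + b * (starRingEnd ℂ) a ≠ 0 := by rwa [mul_comm]
      field_simp
      ring
    rw [hL, hR]
  · -- left loop property
    intro a b c ha hb _
    have hp := den_ne ha hb
    have hq : (1 : ℂ) + a * (starRingEnd ℂ) b ≠ 0 := by
      intro h; apply hp; have := congrArg (starRingEnd ℂ) h; simpa using this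
    have h1 : (1 : ℂ) + (starRingEnd ℂ) (mAdd a b) * b ≠ 0 := den_ne (mAdd_lt ha hb) hb
    have h2 : (1 : ℂ) + mAdd a b * (starRingEnd ℂ) b ≠ 0 := by
      intro h; apply h1; have := congrArg (starRingEnd ℂ) h; simpa using this
    rw [mGyr, mGyr]
    congr 1
    rw [mAdd] at h1 h2 ⊢
    simp only [map_div₀, map_add, map_mul, map_one, Complex.conj_conj] at *
    rw [div_eq_div_iff h1 hp]
    have hp' : (1 : ℂ) + b * (starRingEnd ℂ) a ≠ 0 := by rwa [mul_comm]
    field_simp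
    ring
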